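/- In the semidihedral group SD_{8n} = ⟨a, b | a^{4n} = b² = e, bab = a^{2n−1}⟩ with n ≥ 2, the stabilizer of the tuple α = (1,2,2,...,2,3) ∈ {1,2,3}^{4n} under the right action of SD_{8n} embedded in S_{4n} (via T(a)(t) = t+1 mod 4n, T(b)(t) = (2n−1)t mod 4n) is trivial: the only group element fixing both position 1 and position 4n (i.e., position 0 mod 4n) is the identity. -/

import Mathlib

/-- In the semidihedral group SD_{8n} (n ≥ 2), embedded in the symmetric group on ℤ/4n
via a : t ↦ t + 1 and b : t ↦ (2n−1)t, the only element fixing both the point 1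
(position 1) and the point 0 (position 4n) is the identity; hence the stabilizer of the
tuple α = (1,2,...,2,3) is trivial. -/
theorem stmt15 (n : ℕ) (hn : 2 ≤ n) (a b : Equiv.Perm (ZMod (4 * n)))
    (ha : ∀ t : ZMod (4 * n), a t = t + 1)
    (hb : ∀ t : ZMod (4 * n), b t = (2 * (n : ZMod (4 * n)) - 1) * t) :
    ∀ σ ∈ Subgroup.closure {a, b}, σ 1 = 1 → σ 0 = 0 → σ = 1 := by
  have h0 : (4 * (n : ZMod (4 * n))) = 0 := by
    have := ZMod.natCast_self (4 * n)
    push_cast at this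
    exact this
  -- affine property
  set Q : Equiv.Perm (ZMod (4 * n)) → Prop :=
    fun σ => ∀ t, σ t = (σ 1 - σ 0) * t + σ 0 with hQ
  have hmulQ : ∀ σ τ, Q σ → Q τ → Q (σ * τ) := by
    intro σ τ hσ hτ t
    simp only [Equiv.Perm.mul_apply]
    rw [hτ t, hσ ((τ 1 - τ 0) * t + τ 0), hσ (τ 1), hσ (τ 0)]
    ring
  have hbinv : b⁻¹ = b := by
    rw [eq_comm, eq_inv_iff_mul_eq_one]
    ext t
    simp only [Equiv.Perm.mul_apply, hb, Equiv.Perm.one_apply]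
    linear_combination (n * t - t) * h0
  have key : ∀ σ ∈ Subgroup.closure {a, b}, Q σ ∧ Q σ⁻¹ := by
    intro σ hσ
    induction hσ using Subgroup.closure_induction with
    | mem x hx =>
      rcases hx with rfl | rfl
      · have hainv : ∀ t, x⁻¹ t = t - 1 := by
          intro t
          have : x (t - 1) = t := by rw [ha]; ring
          rw [← this, ← Equiv.Perm.mul_apply, inv_mul_cancel, Equiv.Perm.one_apply, this]
        constructor <;> intro t
        · rw [ha t, ha 1, ha 0]; ring
        · rw [hainv t, hainv 1, hainv 0]; ring
      · constructor <;> intro t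
        · rw [hb t, hb 1, hb 0]; ring
        · rw [hbinv, hb t, hb 1, hb 0]; ring
    | one => constructor <;> intro t <;> simp
    | mul σ τ _ _ hσ hτ =>
      refine ⟨hmulQ _ _ hσ.1 hτ.1, ?_⟩
      rw [mul_inv_rev]
      exact hmulQ _ _ hτ.2 hσ.2
    | inv σ _ hσ => exact ⟨hσ.2, by rw [inv_inv]; exact hσ.1⟩
  intro σ hσ h1 h0'
  have hQσ := (key σ hσ).1
  ext t
  rw [hQσ t, h1, h0']
  simp
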